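/- Let D ≥ 1, let π_Ψ : ℝ^D → ℝ, let G_Ψ : ℝ^D → Matrix (Fin D) (Fin D) ℝ with G_Ψ(ψ) positive definite for every ψ, let φ : ℝ^D ≃ ℝ^D be a bijection, and let J : ℝ^D → Matrix (Fin D) (Fin D) ℝ with J(θ) invertible for every θ. Define π_Θ(θ) = π_Ψ(φ⁻¹(θ)) · |det J(θ)| and G_Θ(θ) = J(θ)ᵀ · G_Ψ(φ⁻¹(θ)) · J(θ). Then a point ψ̂ ∈ ℝ^D is a global maximizer of ψ ↦ π_Ψ(ψ)/√(det G_Ψ(ψ)) if and only if φ(ψ̂) is a global maximizer of θ ↦ π_Θ(θ)/√(det G_Θ(θ)). That is, the Hausdorff MAP is invariant under reparametrization. -/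

import Mathlib

open Matrix

/-- Invariance of the Hausdorff MAP under reparametrization: with transformed density
`π_Θ(θ) = π_Ψ(φ⁻¹(θ))·|det J(θ)|` and transformed metric `G_Θ(θ) = J(θ)ᵀ G_Ψ(φ⁻¹(θ)) J(θ)`,
a point `ψ̂` globally maximizes `ψ ↦ π_Ψ(ψ)/√(det G_Ψ(ψ))` iff `φ(ψ̂)` globally maximizes
`θ ↦ π_Θ(θ)/√(det G_Θ(θ))`. -/
theorem hausdorff_map_invariant
    (D : ℕ) (hD : 1 ≤ D)
    (πΨ : (Fin D → ℝ) → ℝ)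
    (GΨ : (Fin D → ℝ) → Matrix (Fin D) (Fin D) ℝ)
    (hGΨ : ∀ ψ : Fin D → ℝ, (GΨ ψ).PosDef)
    (φ : (Fin D → ℝ) ≃ (Fin D → ℝ))
    (J : (Fin D → ℝ) → Matrix (Fin D) (Fin D) ℝ)
    (hJ : ∀ θ : Fin D → ℝ, IsUnit (J θ))
    (πΘ : (Fin D → ℝ) → ℝ)
    (hπΘ : ∀ θ : Fin D → ℝ, πΘ θ = πΨ (φ.symm θ) * |(J θ).det|)
    (GΘ : (Fin D → ℝ) → Matrix (Fin D) (Fin D) ℝ)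
    (hGΘ : ∀ θ : Fin D → ℝ, GΘ θ = (J θ)ᵀ * GΨ (φ.symm θ) * J θ)
    (ψhat : Fin D → ℝ) :
    (∀ ψ : Fin D → ℝ,
        πΨ ψ / Real.sqrt (GΨ ψ).det ≤ πΨ ψhat / Real.sqrt (GΨ ψhat).det) ↔
      (∀ θ : Fin D → ℝ,
        πΘ θ / Real.sqrt (GΘ θ).det ≤ πΘ (φ ψhat) / Real.sqrt (GΘ (φ ψhat)).det) := by
  have key : ∀ θ : Fin D → ℝ,
      πΘ θ / Real.sqrt (GΘ θ).det = πΨ (φ.symm θ) / Real.sqrt (GΨ (φ.symm θ)).det := by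
    intro θ
    have hdj : (J θ).det ≠ 0 := ((Matrix.isUnit_iff_isUnit_det _).mp (hJ θ)).ne_zero
    have habs : (0:ℝ) < |(J θ).det| := abs_pos.mpr hdj
    have hg : (0:ℝ) < (GΨ (φ.symm θ)).det := (hGΨ _).det_pos
    have hdet : (GΘ θ).det = |(J θ).det| ^ 2 * (GΨ (φ.symm θ)).det := by
      rw [hGΘ, Matrix.det_mul, Matrix.det_mul, Matrix.det_transpose, sq_abs]
      ring
    rw [hπΘ, hdet, Real.sqrt_mul (by positivity), Real.sqrt_sq habs.le]
    rw [mul_comm (πΨ (φ.symm θ)) _]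
    field_simp
  constructor
  · intro h θ
    rw [key θ, key (φ ψhat), Equiv.symm_apply_apply]
    exact h _
  · intro h ψ
    have := h (φ ψ)
    rwa [key (φ ψ), key (φ ψhat), Equiv.symm_apply_apply, Equiv.symm_apply_apply] at this
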